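/- Let ε = 1 or ε = -1, let b₁, b₀, c₂, c₁ : ℝ → ℝ be smooth, and let ξ, η : ℝ → ℝ be smooth. Then the Lie bracket of the vector fields X(ξ) and Y(η) on ℝ⁴ is identically zero: [X(ξ), Y(η)] = 0. -/

import Mathlib

/-- Lie bracket of vector fields on `ℝ⁴`, identified with smooth maps `ℝ⁴ → ℝ⁴`:
`[V,W](p) = DW(p)(V(p)) − DV(p)(W(p))`. -/
noncomputable def VBracket (V W : ℝ × ℝ × ℝ × ℝ → ℝ × ℝ × ℝ × ℝ) :
    ℝ × ℝ × ℝ × ℝ → ℝ × ℝ × ℝ × ℝ :=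
  fun p => fderiv ℝ W p (V p) - fderiv ℝ V p (W p)

/-- The vector field `X(ξ) = ξ(t)∂x + ξ'(t)∂u` in coordinates `(x,y,t,u)`. -/
noncomputable def Xfield (ξ : ℝ → ℝ) : ℝ × ℝ × ℝ × ℝ → ℝ × ℝ × ℝ × ℝ :=
  fun p => (ξ p.2.2.1, 0, 0, deriv ξ p.2.2.1)

/-- The vector field `Y(η)` of Theorem 2 in coordinates `(x,y,t,u)`. -/
noncomputable def Yfield (ε : ℝ) (b₁ b₀ c₂ c₁ : ℝ → ℝ) (η : ℝ → ℝ) :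
    ℝ × ℝ × ℝ × ℝ → ℝ × ℝ × ℝ × ℝ :=
  fun p =>
    (ε / 2 * (b₁ p.2.2.1 * η p.2.2.1 - deriv η p.2.2.1) * p.2.1,
     η p.2.2.1,
     0,
     (-2 * c₂ p.2.2.1 * η p.2.2.1
        + ε / 2 * (deriv b₁ p.2.2.1 * η p.2.2.1 + (b₁ p.2.2.1) ^ 2 * η p.2.2.1
            - deriv (deriv η) p.2.2.1)) * p.2.1
       - c₁ p.2.2.1 * η p.2.2.1
       + ε / 2 * b₀ p.2.2.1 * (b₁ p.2.2.1 * η p.2.2.1 - deriv η p.2.2.1))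

theorem stmt4 (ε : ℝ) (hε : ε = 1 ∨ ε = -1)
    (b₁ b₀ c₂ c₁ : ℝ → ℝ)
    (hb₁ : ContDiff ℝ (⊤ : ℕ∞) b₁) (hb₀ : ContDiff ℝ (⊤ : ℕ∞) b₀)
    (hc₂ : ContDiff ℝ (⊤ : ℕ∞) c₂) (hc₁ : ContDiff ℝ (⊤ : ℕ∞) c₁)
    (ξ η : ℝ → ℝ)
    (hξ : ContDiff ℝ (⊤ : ℕ∞) ξ) (hη : ContDiff ℝ (⊤ : ℕ∞) η) :
    VBracket (Xfield ξ) (Yfield ε b₁ b₀ c₂ c₁ η) = fun _ => (0 : ℝ × ℝ × ℝ × ℝ) := by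
  have hdξ : Differentiable ℝ (deriv ξ) := ((contDiff_infty_iff_deriv.mp hξ).2).differentiable (by simp)
  have hdη : ContDiff ℝ (⊤ : ℕ∞) (deriv η) := (contDiff_infty_iff_deriv.mp hη).2
  have hddη : Differentiable ℝ (deriv (deriv η)) :=
    ((contDiff_infty_iff_deriv.mp hdη).2).differentiable (by simp)
  -- projections as continuous linear maps
  set L : (ℝ × ℝ × ℝ × ℝ) →L[ℝ] ℝ :=
    (ContinuousLinearMap.fst ℝ ℝ ℝ).comp
      ((ContinuousLinearMap.snd ℝ ℝ (ℝ × ℝ)).comp (ContinuousLinearMap.snd ℝ ℝ (ℝ × ℝ × ℝ)))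
    with hLdef
  set M : (ℝ × ℝ × ℝ × ℝ) →L[ℝ] ℝ × ℝ :=
    ((ContinuousLinearMap.fst ℝ ℝ (ℝ × ℝ)).prod
      ((ContinuousLinearMap.fst ℝ ℝ ℝ).comp (ContinuousLinearMap.snd ℝ ℝ (ℝ × ℝ)))).comp
      (ContinuousLinearMap.snd ℝ ℝ (ℝ × ℝ × ℝ)) with hMdef
  set f : ℝ → ℝ × ℝ × ℝ × ℝ := fun t => (ξ t, 0, 0, deriv ξ t) with hfdef
  set g : ℝ × ℝ → ℝ × ℝ × ℝ × ℝ := fun q =>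
    (ε / 2 * (b₁ q.2 * η q.2 - deriv η q.2) * q.1,
     η q.2,
     0,
     (-2 * c₂ q.2 * η q.2
        + ε / 2 * (deriv b₁ q.2 * η q.2 + (b₁ q.2) ^ 2 * η q.2
            - deriv (deriv η) q.2)) * q.1
       - c₁ q.2 * η q.2
       + ε / 2 * b₀ q.2 * (b₁ q.2 * η q.2 - deriv η q.2)) with hgdef
  have hX : Xfield ξ = f ∘ (fun p => L p) := rfl
  have hY : Yfield ε b₁ b₀ c₂ c₁ η = g ∘ (fun p => M p) := rfl
  have hdb₁ : Differentiable ℝ (deriv b₁) :=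
    ((contDiff_infty_iff_deriv.mp hb₁).2).differentiable (by simp)
  have hf : Differentiable ℝ f := by
    refine Differentiable.prodMk (hξ.differentiable (by simp)) ?_
    exact (differentiable_const _).prodMk ((differentiable_const _).prodMk hdξ)
  have hg : Differentiable ℝ g := by
    have h1 : Differentiable ℝ b₁ := hb₁.differentiable (by simp)
    have h0 : Differentiable ℝ b₀ := hb₀.differentiable (by simp)
    have h2 : Differentiable ℝ c₂ := hc₂.differentiable (by simp)
    have h3 : Differentiable ℝ c₁ := hc₁.differentiable (by simp)
    have hh : Differentiable ℝ η := hη.differentiable (by simp)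
    have hdh : Differentiable ℝ (deriv η) := hdη.differentiable (by simp)
    refine Differentiable.prodMk ?_ (Differentiable.prodMk ?_ (Differentiable.prodMk ?_ ?_)) <;>
      fun_prop
  funext p
  show fderiv ℝ (Yfield ε b₁ b₀ c₂ c₁ η) p (Xfield ξ p)
      - fderiv ℝ (Xfield ξ) p (Yfield ε b₁ b₀ c₂ c₁ η p) = 0
  have hfdY : fderiv ℝ (Yfield ε b₁ b₀ c₂ c₁ η) p
      = (fderiv ℝ g (M p)).comp M := by
    rw [hY]
    rw [fderiv_comp p (hg _) M.differentiableAt, M.fderiv]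
  have hfdX : fderiv ℝ (Xfield ξ) p = (fderiv ℝ f (L p)).comp L := by
    rw [hX]
    rw [fderiv_comp p (hf _) L.differentiableAt, L.fderiv]
  have hMX : M (Xfield ξ p) = 0 := by
    simp [hMdef, Xfield, Prod.ext_iff]
  have hLY : L (Yfield ε b₁ b₀ c₂ c₁ η p) = 0 := by
    simp [hLdef, Yfield]
  rw [hfdY, hfdX]
  simp [ContinuousLinearMap.comp_apply, hMX, hLY]
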